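/- For all n ∈ ℕ, the model Sq ⊙ IS^n (the square model updated n times with the immediate snapshot pattern) is a circular ab-chain, consisting of 4·3^n worlds arranged in a cycle with alternating a-edges and b-edges. -/

import Mathlib

namespace Stmt8

/-- The two agents: `false` is agent `a`, `true` is agent `b`. -/
abbrev Agent := Bool

/-- The three communication graphs of `IS = {R^{ab}, R^{ba}, U}`. -/
inductive Pat : Type
  | Rab | Rba | U

/-- `recv R c` is `Rc = {d | (d,c) ∈ R}`. -/
def recv : Pat → Agent → Set Agent
  | Pat.Rab, false => {false}
  | Pat.Rab, true => Set.univ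
  | Pat.Rba, false => Set.univ
  | Pat.Rba, true => {true}
  | Pat.U, _ => Set.univ

/-- Worlds of `Sq ⊙ IS^n`: the four valuations of `{p_a,p_b}` paired with `n`
communication graphs. -/
def WIter : ℕ → Type
  | 0 => Bool × Bool
  | n + 1 => WIter n × Pat

/-- Relations of `Sq ⊙ IS^n`: in `Sq`, `a` knows `p_a` and `b` knows `p_b`; the
update is `(w,R) ∼̇_c (w',R')` iff `Rc = R'c` and `w ∼_{Rc} w'`. -/
def simIter : (n : ℕ) → Agent → WIter n → WIter n → Prop
  | 0, c, w, w' => if c then w.2 = w'.2 else w.1 = w'.1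
  | n + 1, c, x, y => recv x.2 c = recv y.2 c ∧ ∀ d ∈ recv x.2 c, simIter n d x.1 y.1

/-- Cyclic neighbour of world `k` for agent `c` in the circular `ab`-chain on
`2m` worlds (`2i ∼_a 2i+1`, `2i ∼_b 2i−1` mod `2m`). -/
noncomputable def partner (m : ℕ) (c : Agent) (k : ZMod (2 * m)) : ZMod (2 * m) :=
  if Even k.val ↔ c = false then k + 1 else k - 1

/-- The relation of the circular `ab`-chain on `2m` worlds. -/
noncomputable def chainRel (m : ℕ) (c : Agent) (u v : ZMod (2 * m)) : Prop :=
  v = u ∨ v = partner m c u ∨ u = partner m c v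


/-- parity of an element of `ZMod N`. -/
def par {N : ℕ} (t : ZMod N) : ZMod 2 := (t.val : ZMod 2)

lemma cast_mod_two {N : ℕ} (h2 : 2 ∣ N) (a : ℕ) : ((a % N : ℕ) : ZMod 2) = (a : ZMod 2) := by
  conv_rhs => rw [← Nat.mod_add_div a N]
  push_cast
  rw [(ZMod.natCast_eq_zero_iff N 2).2 h2]
  ring

lemma par_natCast {N : ℕ} [NeZero N] (h2 : 2 ∣ N) (a : ℕ) : par ((a : ZMod N)) = (a : ZMod 2) := by
  rw [par, ZMod.val_natCast, cast_mod_two h2]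

lemma par_add {N : ℕ} [NeZero N] (h2 : 2 ∣ N) (x y : ZMod N) :
    par (x + y) = par x + par y := by
  rw [par, ZMod.val_add, cast_mod_two h2]
  push_cast
  rfl

lemma par_zero {N : ℕ} [NeZero N] : par (0 : ZMod N) = 0 := by
  simp [par, ZMod.val_zero]

lemma par_one {N : ℕ} [NeZero N] (h2 : 2 ∣ N) : par (1 : ZMod N) = 1 := by
  have hN : 1 < N := by
    rcases h2 with ⟨c, rfl⟩
    have := NeZero.pos (2 * c)
    omega
  rw [par, ZMod.val_one_eq_one_mod, cast_mod_two h2]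
  rfl

lemma par_neg_one {N : ℕ} [NeZero N] (h2 : 2 ∣ N) : par (-1 : ZMod N) = 1 := by
  have := par_add h2 (-1 : ZMod N) 1
  simp [par_zero, par_one h2] at this
  -- this : 0 = par (-1) + 1
  have h2' : ∀ x : ZMod 2, (0 : ZMod 2) = x + 1 → x = 1 := by decide
  exact h2' _ this

lemma even_val_iff {N : ℕ} (t : ZMod N) : Even t.val ↔ par t = 0 := by
  rw [Nat.even_iff, par]
  constructor
  · intro h; rw [← Nat.mod_add_div t.val 2, h]; push_cast
    rw [show (2 : ZMod 2) = 0 from rfl]; ring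
  · intro h
    have := (ZMod.natCast_eq_zero_iff t.val 2).1 h
    omega

lemma zmod2_cases : ∀ x : ZMod 2, x = 0 ∨ x = 1 := by decide



section PartnerLemmas
variable {m : ℕ}

lemma two_mul_ne (hm : 0 < m) : NeZero (2*m) := ⟨by omega⟩

lemma partner_eq (c : Agent) (k : ZMod (2*m)) :
    partner m c k = if par k = (if c then 1 else 0) then k + 1 else k - 1 := by
  unfold partner
  cases c
  · simp only [Bool.false_eq_true] -- ?
    apply if_congr _ rfl rfl
    simp [even_val_iff]
  · apply if_congr _ rfl rfl
    rw [even_val_iff]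
    constructor
    · intro h
      rcases zmod2_cases (par k) with h0 | h1
      · exact absurd (h.1 h0) (by simp)
      · exact h1
    · intro h
      rw [h]
      simp [show (1:ZMod 2) ≠ 0 by decide]

lemma par_partner (hm : 0 < m) (c : Agent) (k : ZMod (2*m)) :
    par (partner m c k) = par k + 1 := by
  haveI := two_mul_ne hm
  have h2 : 2 ∣ 2*m := ⟨m, rfl⟩
  cases c <;> rw [partner_eq] <;> rcases zmod2_cases (par k) with h | h <;>
    simp [h, sub_eq_add_neg, par_add h2, par_one h2, par_neg_one h2,
      show (0:ZMod 2) ≠ 1 by decide, show (1:ZMod 2) ≠ 0 by decide]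

lemma partner_partner (hm : 0 < m) (c : Agent) (k : ZMod (2*m)) :
    partner m c (partner m c k) = k := by
  haveI := two_mul_ne hm
  have hpp := par_partner hm c k
  rw [partner_eq c (partner m c k), hpp, partner_eq c k]
  rcases zmod2_cases (par k) with h | h <;> cases c <;>
    simp [h, show (0:ZMod 2) + 1 ≠ 0 by decide, show (1:ZMod 2) + 1 = 0 by decide,
      show (1:ZMod 2) ≠ 0 by decide]

lemma partner_ne (hm : 0 < m) (c : Agent) (k : ZMod (2*m)) : partner m c k ≠ k := by
  intro h
  have := par_partner hm c k
  rw [h] at this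
  rcases zmod2_cases (par k) with h' | h' <;> rw [h'] at this <;> exact absurd this (by decide)

lemma two_ne_zero'' (hm : 2 ≤ m) : (2 : ZMod (2*m)) ≠ 0 := by
  intro h
  have : ((2:ℕ) : ZMod (2*m)) = 0 := by exact_mod_cast h
  have := (ZMod.natCast_eq_zero_iff 2 (2*m)).1 this
  have := Nat.le_of_dvd (by omega) this
  omega

lemma partner_false_ne_true (hm : 2 ≤ m) (k : ZMod (2*m)) :
    partner m false k ≠ partner m true k := by
  have h2 := two_ne_zero'' hm
  intro heq
  rw [partner_eq, partner_eq] at heq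
  rcases zmod2_cases (par k) with h | h <;>
    simp [h, show (0:ZMod 2) ≠ 1 by decide, show (1:ZMod 2) ≠ 0 by decide] at heq
  · exact h2 (by linear_combination heq)
  · exact h2 (by linear_combination -heq)

lemma chainRel_iff (hm : 0 < m) (c : Agent) (u v : ZMod (2*m)) :
    chainRel m c u v ↔ v = u ∨ v = partner m c u := by
  unfold chainRel
  constructor
  · rintro (h | h | h)
    · exact Or.inl h
    · exact Or.inr h
    · exact Or.inr (by rw [h, partner_partner hm])
  · rintro (h | h)
    · exact Or.inl h
    · exact Or.inr (Or.inl h)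

lemma chain_both (hm : 2 ≤ m) (u v : ZMod (2*m)) :
    chainRel m false u v ∧ chainRel m true u v ↔ v = u := by
  have hm0 : 0 < m := by omega
  rw [chainRel_iff hm0, chainRel_iff hm0]
  constructor
  · rintro ⟨h1 | h1, h2 | h2⟩
    · exact h1
    · exact h1
    · exact h2
    · exact absurd (h1.symm.trans h2) (partner_false_ne_true hm u)
  · intro h; exact ⟨Or.inl h, Or.inl h⟩

end PartnerLemmas

section Tri

/-- residue mod 3 of an element of `ZMod N`. -/
def tri {N : ℕ} (t : ZMod N) : ZMod 3 := (t.val : ZMod 3)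

lemma cast_mod_three {N : ℕ} (h3 : 3 ∣ N) (a : ℕ) : ((a % N : ℕ) : ZMod 3) = (a : ZMod 3) := by
  conv_rhs => rw [← Nat.mod_add_div a N]
  push_cast
  rw [(ZMod.natCast_eq_zero_iff N 3).2 h3]
  ring

lemma tri_natCast {N : ℕ} [NeZero N] (h3 : 3 ∣ N) (a : ℕ) : tri ((a : ZMod N)) = (a : ZMod 3) := by
  rw [tri, ZMod.val_natCast, cast_mod_three h3]

lemma tri_add {N : ℕ} [NeZero N] (h3 : 3 ∣ N) (x y : ZMod N) :
    tri (x + y) = tri x + tri y := by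
  rw [tri, ZMod.val_add, cast_mod_three h3]
  push_cast
  rfl

lemma tri_zero {N : ℕ} [NeZero N] : tri (0 : ZMod N) = 0 := by
  simp [tri, ZMod.val_zero]

lemma tri_one {N : ℕ} [NeZero N] (h3 : 3 ∣ N) : tri (1 : ZMod N) = 1 := by
  have hN : 1 < N := by
    rcases h3 with ⟨c, rfl⟩
    have := NeZero.pos (3 * c)
    omega
  rw [tri, ZMod.val_one_eq_one_mod, cast_mod_three h3]
  rfl

lemma zmod3_cases : ∀ x : ZMod 3, x = 0 ∨ x = 1 ∨ x = 2 := by decide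

lemma tri_neg_one {N : ℕ} [NeZero N] (h3 : 3 ∣ N) : tri (-1 : ZMod N) = 2 := by
  have h := tri_add h3 (-1 : ZMod N) 1
  rw [neg_add_cancel, tri_zero, tri_one h3] at h
  rcases zmod3_cases (tri (-1 : ZMod N)) with h' | h' | h' <;> rw [h'] at h ⊢ <;> first | rfl | (exact absurd h.symm (by decide))

lemma tri_neg_two {N : ℕ} [NeZero N] (h3 : 3 ∣ N) : tri (-2 : ZMod N) = 1 := by
  have h := tri_add h3 (-2 : ZMod N) 1
  rw [show (-2 : ZMod N) + 1 = -1 by ring, tri_neg_one h3, tri_one h3] at h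
  rcases zmod3_cases (tri (-2 : ZMod N)) with h' | h' | h' <;> rw [h'] at h ⊢ <;> first | rfl | (exact absurd h.symm (by decide))

lemma tri_three_mul {N : ℕ} [NeZero N] (h3 : 3 ∣ N) (t : ZMod N) : tri (3 * t) = 0 := by
  rw [show (3 : ZMod N) * t = t + (t + t) by ring, tri_add h3, tri_add h3]
  rcases zmod3_cases (tri t) with h | h | h <;> rw [h] <;> decide

lemma par_neg_two {N : ℕ} [NeZero N] (h2 : 2 ∣ N) : par (-2 : ZMod N) = 0 := by
  have h := par_add h2 (-1 : ZMod N) (-1)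
  rw [show (-1 : ZMod N) + -1 = -2 by ring, par_neg_one h2] at h
  rw [h]; decide

lemma par_three_mul {N : ℕ} [NeZero N] (h2 : 2 ∣ N) (t : ZMod N) : par (3 * t) = par t := by
  rw [show (3 : ZMod N) * t = t + (t + t) by ring, par_add h2, par_add h2]
  rcases zmod2_cases (par t) with h | h <;> rw [h] <;> decide

end Tri

section G
variable (m : ℕ)

/-- offset of a pattern inside a block of three. -/
noncomputable def off (p : ZMod 2) (P : Pat) : ZMod (2*(3*m)) :=
  if p = 0 then (match P with | .Rab => 0 | .U => -1 | .Rba => -2)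
  else (match P with | .Rab => -2 | .U => -1 | .Rba => 0)

/-- the tripling map. -/
noncomputable def g (k : ZMod (2*m)) (P : Pat) : ZMod (2*(3*m)) :=
  3 * ((k.val : ℕ) : ZMod (2*(3*m))) + off m (par k) P

variable {m} (hm : 2 ≤ m)

section WithHm
include hm

lemma hm6 : NeZero (2*(3*m)) := ⟨by omega⟩
lemma hm2 : NeZero (2*m) := ⟨by omega⟩

lemma par_off (p : ZMod 2) (P : Pat) :
    par (off m p P) = (match P with | .U => 1 | _ => 0) := by
  haveI := hm6 hm
  have h2 : 2 ∣ 2*(3*m) := ⟨3*m, rfl⟩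
  rcases zmod2_cases p with h | h <;> cases P <;>
    simp [off, h, par_zero, par_neg_one h2, par_neg_two h2,
      show (1 : ZMod 2) ≠ 0 by decide]

lemma tri_off (p : ZMod 2) (P : Pat) :
    tri (off m p P) =
      if p = 0 then (match P with | .Rab => 0 | .U => 2 | .Rba => 1)
      else (match P with | .Rab => 1 | .U => 2 | .Rba => 0) := by
  haveI := hm6 hm
  have h3 : 3 ∣ 2*(3*m) := ⟨2*m, by ring⟩
  rcases zmod2_cases p with h | h <;> cases P <;>
    simp [off, h, tri_zero, tri_neg_one h3, tri_neg_two h3,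
      show (1 : ZMod 2) ≠ 0 by decide]

lemma par_g (k : ZMod (2*m)) (P : Pat) :
    par (g m k P) = par k + (match P with | .U => 1 | _ => 0) := by
  haveI := hm6 hm
  have h2 : 2 ∣ 2*(3*m) := ⟨3*m, rfl⟩
  rw [g, par_add h2, par_three_mul h2, par_natCast h2, par_off hm]
  rfl

lemma tri_g (k : ZMod (2*m)) (P : Pat) :
    tri (g m k P) = tri (off m (par k) P) := by
  haveI := hm6 hm
  have h3 : 3 ∣ 2*(3*m) := ⟨2*m, by ring⟩
  rw [g, tri_add h3, tri_three_mul h3, zero_add]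

lemma g_inj {k k' : ZMod (2*m)} {P P' : Pat} (h : g m k P = g m k' P') :
    k = k' ∧ P = P' := by
  haveI := hm6 hm
  haveI := hm2 hm
  have hσ := congrArg par h
  have hρ := congrArg tri h
  rw [par_g hm, par_g hm] at hσ
  rw [tri_g hm, tri_g hm, tri_off hm, tri_off hm] at hρ
  have hPp : par k = par k' ∧ P = P' := by
    rcases zmod2_cases (par k) with h1 | h1 <;> rcases zmod2_cases (par k') with h2 | h2 <;>
      rw [h1, h2] at hσ hρ <;> cases P <;> cases P' <;> simp_all <;>
      first
        | rfl
        | (exact absurd hσ (by decide))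
        | (exact absurd hρ (by decide))
  refine ⟨?_, hPp.2⟩
  rw [g, g, hPp.1, hPp.2] at h
  have h3 : 3 * ((k.val : ℕ) : ZMod (2*(3*m))) = 3 * ((k'.val : ℕ) : ZMod (2*(3*m))) := by
    have := add_right_cancel h
    exact this
  have hc : (((3 * k.val : ℕ)) : ZMod (2*(3*m))) = ((3 * k'.val : ℕ) : ZMod (2*(3*m))) := by
    push_cast
    exact h3
  have hv := congrArg ZMod.val hc
  rw [ZMod.val_natCast, ZMod.val_natCast] at hv
  have hk : k.val < 2*m := ZMod.val_lt k
  have hk' : k'.val < 2*m := ZMod.val_lt k'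
  rw [Nat.mod_eq_of_lt (by omega), Nat.mod_eq_of_lt (by omega)] at hv
  have : k.val = k'.val := by omega
  exact ZMod.val_injective _ this

lemma three_cast_add_one (k : ZMod (2*m)) :
    3 * (((k+1).val : ℕ) : ZMod (2*(3*m))) = 3 * ((k.val : ℕ) : ZMod (2*(3*m))) + 3 := by
  haveI := hm6 hm
  haveI := hm2 hm
  haveI : Fact (1 < 2*m) := ⟨by omega⟩
  have h1 : (1 : ZMod (2*m)).val = 1 := ZMod.val_one _
  rw [ZMod.val_add, h1]
  have hk : k.val < 2*m := ZMod.val_lt k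
  rcases Nat.lt_or_ge (k.val + 1) (2*m) with hlt | hge
  · rw [Nat.mod_eq_of_lt hlt]
    push_cast
    ring
  · have he : k.val + 1 = 2*m := by omega
    rw [he, Nat.mod_self]
    have hkv : k.val = 2*m - 1 := by omega
    rw [hkv]
    have : ((2*m - 1 : ℕ) : ZMod (2*(3*m))) = ((2*m : ℕ) : ZMod (2*(3*m))) - 1 := by
      rw [Nat.cast_sub (by omega)]
      simp
    rw [this]
    have hz : ((2*(3*m) : ℕ) : ZMod (2*(3*m))) = 0 := ZMod.natCast_self _
    push_cast at hz ⊢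
    linear_combination -hz

lemma three_cast_sub_one (k : ZMod (2*m)) :
    3 * (((k-1).val : ℕ) : ZMod (2*(3*m))) = 3 * ((k.val : ℕ) : ZMod (2*(3*m))) - 3 := by
  have h := three_cast_add_one hm (k - 1)
  rw [sub_add_cancel] at h
  linear_combination -h

lemma par_add_one (k : ZMod (2*m)) : par (k + 1) = par k + 1 := by
  haveI := hm2 hm
  rw [par_add ⟨m, rfl⟩, par_one ⟨m, rfl⟩]

lemma par_sub_one (k : ZMod (2*m)) : par (k - 1) = par k + 1 := by
  haveI := hm2 hm
  rw [sub_eq_add_neg, par_add ⟨m, rfl⟩, par_neg_one ⟨m, rfl⟩]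

end WithHm
end G

section GPartner
variable {m : ℕ} (hm : 2 ≤ m)
include hm

lemma gp_a_Rab (k : ZMod (2*m)) :
    partner (3*m) false (g m k .Rab) = g m (partner m false k) .Rab := by
  haveI := hm6 hm; haveI := hm2 hm
  rw [partner_eq false (g m k Pat.Rab), par_g hm, partner_eq false k]
  rcases zmod2_cases (par k) with h | h
  · simp [h, g, off, par_add_one hm, par_sub_one hm, show (0:ZMod 2)+1 ≠ 0 by decide, show (0:ZMod 2)+1 = 1 by decide, show (1:ZMod 2)+1 = 0 by decide, show (1:ZMod 2) ≠ 0 by decide, show (0:ZMod 2) ≠ 1 by decide, show (1:ZMod 2)+1 ≠ 1 by decide, -ZMod.natCast_val]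
    linear_combination -three_cast_add_one hm k
  · simp [h, g, off, par_add_one hm, par_sub_one hm, show (0:ZMod 2)+1 ≠ 0 by decide, show (0:ZMod 2)+1 = 1 by decide, show (1:ZMod 2)+1 = 0 by decide, show (1:ZMod 2) ≠ 0 by decide, show (0:ZMod 2) ≠ 1 by decide, show (1:ZMod 2)+1 ≠ 1 by decide, -ZMod.natCast_val]
    linear_combination -three_cast_sub_one hm k

lemma gp_a_U (k : ZMod (2*m)) :
    partner (3*m) false (g m k .U) = g m k .Rba := by
  haveI := hm6 hm; haveI := hm2 hm
  rw [partner_eq false (g m k Pat.U), par_g hm]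
  rcases zmod2_cases (par k) with h | h <;>
    simp [h, g, off, par_add_one hm, par_sub_one hm, show (0:ZMod 2)+1 ≠ 0 by decide, show (0:ZMod 2)+1 = 1 by decide, show (1:ZMod 2)+1 = 0 by decide, show (1:ZMod 2) ≠ 0 by decide, show (0:ZMod 2) ≠ 1 by decide, show (1:ZMod 2)+1 ≠ 1 by decide, -ZMod.natCast_val] <;> ring

lemma gp_a_Rba (k : ZMod (2*m)) :
    partner (3*m) false (g m k .Rba) = g m k .U := by
  haveI := hm6 hm; haveI := hm2 hm
  rw [partner_eq false (g m k Pat.Rba), par_g hm]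
  rcases zmod2_cases (par k) with h | h <;>
    simp [h, g, off, par_add_one hm, par_sub_one hm, show (0:ZMod 2)+1 ≠ 0 by decide, show (0:ZMod 2)+1 = 1 by decide, show (1:ZMod 2)+1 = 0 by decide, show (1:ZMod 2) ≠ 0 by decide, show (0:ZMod 2) ≠ 1 by decide, show (1:ZMod 2)+1 ≠ 1 by decide, -ZMod.natCast_val] <;> ring

lemma gp_b_Rba (k : ZMod (2*m)) :
    partner (3*m) true (g m k .Rba) = g m (partner m true k) .Rba := by
  haveI := hm6 hm; haveI := hm2 hm
  rw [partner_eq true (g m k Pat.Rba), par_g hm, partner_eq true k]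
  rcases zmod2_cases (par k) with h | h
  · simp [h, g, off, par_add_one hm, par_sub_one hm, show (0:ZMod 2)+1 ≠ 0 by decide, show (0:ZMod 2)+1 = 1 by decide, show (1:ZMod 2)+1 = 0 by decide, show (1:ZMod 2) ≠ 0 by decide, show (0:ZMod 2) ≠ 1 by decide, show (1:ZMod 2)+1 ≠ 1 by decide, -ZMod.natCast_val]
    linear_combination -three_cast_sub_one hm k
  · simp [h, g, off, par_add_one hm, par_sub_one hm, show (0:ZMod 2)+1 ≠ 0 by decide, show (0:ZMod 2)+1 = 1 by decide, show (1:ZMod 2)+1 = 0 by decide, show (1:ZMod 2) ≠ 0 by decide, show (0:ZMod 2) ≠ 1 by decide, show (1:ZMod 2)+1 ≠ 1 by decide, -ZMod.natCast_val]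
    linear_combination -three_cast_add_one hm k

lemma gp_b_Rab (k : ZMod (2*m)) :
    partner (3*m) true (g m k .Rab) = g m k .U := by
  haveI := hm6 hm; haveI := hm2 hm
  rw [partner_eq true (g m k Pat.Rab), par_g hm]
  rcases zmod2_cases (par k) with h | h <;>
    simp [h, g, off, par_add_one hm, par_sub_one hm, show (0:ZMod 2)+1 ≠ 0 by decide, show (0:ZMod 2)+1 = 1 by decide, show (1:ZMod 2)+1 = 0 by decide, show (1:ZMod 2) ≠ 0 by decide, show (0:ZMod 2) ≠ 1 by decide, show (1:ZMod 2)+1 ≠ 1 by decide, -ZMod.natCast_val] <;> ring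

lemma gp_b_U (k : ZMod (2*m)) :
    partner (3*m) true (g m k .U) = g m k .Rab := by
  haveI := hm6 hm; haveI := hm2 hm
  rw [partner_eq true (g m k Pat.U), par_g hm]
  rcases zmod2_cases (par k) with h | h <;>
    simp [h, g, off, par_add_one hm, par_sub_one hm, show (0:ZMod 2)+1 ≠ 0 by decide, show (0:ZMod 2)+1 = 1 by decide, show (1:ZMod 2)+1 = 0 by decide, show (1:ZMod 2) ≠ 0 by decide, show (0:ZMod 2) ≠ 1 by decide, show (1:ZMod 2)+1 ≠ 1 by decide, -ZMod.natCast_val] <;> ring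

end GPartner

deriving instance DecidableEq for Pat
instance : Fintype Pat := ⟨{Pat.Rab, Pat.Rba, Pat.U}, by intro x; cases x <;> simp⟩

section Step

lemma univ_ne_singleton_false : Set.univ ≠ ({false} : Set Agent) := fun h => by
  have : (true : Agent) ∈ ({false} : Set Agent) := h ▸ Set.mem_univ true
  simp at this

lemma univ_ne_singleton_true : Set.univ ≠ ({true} : Set Agent) := fun h => by
  have : (false : Agent) ∈ ({true} : Set Agent) := h ▸ Set.mem_univ false
  simp at this

lemma singleton_false_ne_univ : ({false} : Set Agent) ≠ Set.univ := by
  intro h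
  have : (true : Agent) ∈ ({false} : Set Agent) := h ▸ Set.mem_univ true
  simp at this

lemma singleton_true_ne_univ : ({true} : Set Agent) ≠ Set.univ := by
  intro h
  have : (false : Agent) ∈ ({true} : Set Agent) := h ▸ Set.mem_univ false
  simp at this

lemma g_bij {m : ℕ} (hm : 2 ≤ m) :
    Function.Bijective (fun x : ZMod (2*m) × Pat => g m x.1 x.2) := by
  haveI := hm6 hm
  haveI := hm2 hm
  rw [Fintype.bijective_iff_injective_and_card]
  constructor
  · rintro ⟨k, P⟩ ⟨k', P'⟩ h
    obtain ⟨h1, h2⟩ := g_inj hm h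
    exact Prod.ext h1 h2
  · have hcard : Fintype.card Pat = 3 := rfl
    simp [ZMod.card, hcard]
    ring


set_option maxHeartbeats 1000000 in
lemma step {W : Type} (m : ℕ) (hm : 2 ≤ m) (sim : Agent → W → W → Prop)
    (e : W ≃ ZMod (2*m)) (he : ∀ c x y, sim c x y ↔ chainRel m c (e x) (e y)) :
    ∃ e' : W × Pat ≃ ZMod (2*(3*m)),
      ∀ (c : Agent) (x y : W × Pat),
        (recv x.2 c = recv y.2 c ∧ ∀ d ∈ recv x.2 c, sim d x.1 y.1) ↔
          chainRel (3*m) c (e' x) (e' y) := by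
  have hm0 : 0 < m := by omega
  have hm3 : 2 ≤ 3*m := by omega
  have hm30 : 0 < 3*m := by omega
  refine ⟨(Equiv.prodCongr e (Equiv.refl Pat)).trans (Equiv.ofBijective _ (g_bij hm)), ?_⟩
  rintro c ⟨w, P⟩ ⟨w', P'⟩
  show (recv P c = recv P' c ∧ ∀ d ∈ recv P c, sim d w w') ↔
    chainRel (3*m) c (g m (e w) P) (g m (e w') P')
  have gcan : ∀ (k k' : ZMod (2*m)) (Q Q' : Pat), g m k Q = g m k' Q' ↔ (k = k' ∧ Q = Q') := by
    intro k k' Q Q'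
    constructor
    · exact fun h => g_inj hm h
    · rintro ⟨rfl, rfl⟩; rfl
  have hne := partner_false_ne_true hm (e w)
  have hsym : ∀ c', sim c' w w' ↔ (e w' = e w ∨ e w' = partner m c' (e w)) := by
    intro c'; rw [he, chainRel_iff hm0]
  rw [chainRel_iff hm30]
  cases c <;> cases P <;> cases P' <;>
    simp only [recv, gp_a_Rab hm, gp_a_U hm, gp_a_Rba hm, gp_b_Rab hm, gp_b_U hm,
      gp_b_Rba hm, gcan, hsym, singleton_false_ne_univ, singleton_true_ne_univ,
      univ_ne_singleton_false, univ_ne_singleton_true, reduceCtorEq,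
      Set.mem_singleton_iff, Set.mem_univ, forall_eq, true_implies, forall_const,
      Bool.forall_bool, false_and, and_false, true_and, and_true, false_or, or_false,
      eq_self_iff_true, not_true, not_false_iff, iff_false, false_iff, ne_eq]
  all_goals try tauto
  all_goals
    (constructor
     · rintro ⟨h1 | h1, h2 | h2⟩ <;>
         first | exact h1 | exact h2 | exact absurd (h1.symm.trans h2) hne
     · exact fun h => ⟨Or.inl h, Or.inl h⟩)

end Step

/-- explicit equivalence for the base case `Sq`. -/
def e0 : (Bool × Bool) ≃ ZMod (2*2) where
  toFun x := match x with
    | (false, false) => 0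
    | (false, true) => 1
    | (true, true) => 2
    | (true, false) => 3
  invFun t := if t = 0 then (false, false) else if t = 1 then (false, true)
    else if t = 2 then (true, true) else (true, false)
  left_inv := by decide
  right_inv := by decide

/-- For all `n`, `Sq ⊙ IS^n` is a circular `ab`-chain with `4·3^n` worlds. -/
theorem sq_iter_is_circular_chain (n : ℕ) :
    ∃ e : WIter n ≃ ZMod (2 * (2 * 3 ^ n)),
      ∀ (c : Agent) (x y : WIter n),
        simIter n c x y ↔ chainRel (2 * 3 ^ n) c (e x) (e y) := by
  induction n with
  | zero =>
    refine ⟨e0, ?_⟩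
    suffices h : ∀ (c : Agent) (x y : Bool × Bool),
        simIter 0 c x y ↔ chainRel 2 c (e0 x) (e0 y) from h
    simp only [chainRel, partner_eq, simIter]
    decide
  | succ n ih =>
    obtain ⟨e, he⟩ := ih
    have hpow : 1 ≤ 3 ^ n := Nat.one_le_pow _ _ (by omega)
    have h3 : (2 * 3 ^ (n+1)) = 3 * (2 * 3 ^ n) := by ring
    rw [h3]
    exact step (2 * 3 ^ n) (by omega) (simIter n) e he

end Stmt8
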